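/- Let X be the solution of the recursive distributional equation X =_d √U·X + √U·(1−√U). Then for every integer k ≥ 1, E[X^k] = 2·(k+2)!·(k−1)! · Σ_{i=0}^{k−1} E[X^i]/((2k−i+2)!·i!). In particular E[X] = 1/2, E[X²] = 4/15 and Var(X) = 1/60. -/

import Mathlib

open MeasureTheory

noncomputable section

/-- The uniform distribution on `[0,1]`. -/
def unif : Measure ℝ := volume.restrict (Set.Icc 0 1)

/-- The map `(x, u) ↦ √u·x + √u·(1 − √u)`. -/
def rdeMap (q : ℝ × ℝ) : ℝ :=
  Real.sqrt q.2 * q.1 + Real.sqrt q.2 * (1 - Real.sqrt q.2)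

/-- `μ` is a (probability) solution of the recursive distributional equation
`X =_d √U·X + √U·(1 − √U)` with `X, U` independent and `U` uniform on `[0,1]`. -/
def IsRDESolution (μ : Measure ℝ) : Prop :=
  IsProbabilityMeasure μ ∧ Measure.map rdeMap (μ.prod unif) = μ

lemma beta_nat (b a : ℕ) :
    ∫ t in (0:ℝ)..1, t ^ a * (1 - t) ^ b
      = (a.factorial * b.factorial : ℝ) / (a + b + 1).factorial := by
  induction b generalizing a with
  | zero =>
    simp only [pow_zero, mul_one, integral_pow, Nat.add_zero, Nat.factorial,
      Nat.factorial_succ]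
    push_cast
    have ha : ((a:ℝ)+1) ≠ 0 := by positivity
    have hf : (a.factorial : ℝ) ≠ 0 := by positivity
    field_simp
    simp
  | succ b ih =>
    have hu : ∀ t ∈ Set.uIcc (0:ℝ) 1, HasDerivAt (fun t : ℝ => (1 - t) ^ (b+1))
        (-((b+1) * (1 - t) ^ b)) t := by
      intro t _
      have := ((hasDerivAt_id t).const_sub 1).fun_pow (b+1)
      simpa [mul_comm, mul_assoc] using this
    have hv : ∀ t ∈ Set.uIcc (0:ℝ) 1, HasDerivAt (fun t : ℝ => t ^ (a+1) / (a+1))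
        (t ^ a) t := by
      intro t _
      have := (hasDerivAt_pow (a+1) t).div_const ((a:ℝ)+1)
      have ha : ((a:ℝ)+1) ≠ 0 := by positivity
      simpa [mul_comm, mul_div_assoc, ha, Nat.cast_add] using this
    have hiu : IntervalIntegrable (fun t : ℝ => -(((b:ℝ)+1) * (1 - t) ^ b)) volume 0 1 :=
      (Continuous.intervalIntegrable (by continuity) _ _)
    have hiv : IntervalIntegrable (fun t : ℝ => t ^ a) volume 0 1 :=
      (Continuous.intervalIntegrable (by continuity) _ _)
    have key := intervalIntegral.integral_mul_deriv_eq_deriv_mul hu hv hiu hiv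
    have h1 : (∫ t in (0:ℝ)..1, (1 - t) ^ (b+1) * t ^ a)
        = ((b:ℝ)+1)/((a:ℝ)+1) * ∫ t in (0:ℝ)..1, t ^ (a+1) * (1-t) ^ b := by
      rw [key, ← intervalIntegral.integral_const_mul]
      have hz : ((1:ℝ) - 1) ^ (b + 1) * (1 ^ (a + 1) / ((a:ℝ) + 1)) -
          (1 - (0:ℝ)) ^ (b + 1) * (0 ^ (a + 1) / ((a:ℝ) + 1)) = 0 := by
        simp
      rw [hz, zero_sub, ← intervalIntegral.integral_neg]
      apply intervalIntegral.integral_congr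
      intro t _
      have ha : ((a:ℝ)+1) ≠ 0 := by positivity
      field_simp
    have h2 : (∫ t in (0:ℝ)..1, t ^ a * (1 - t) ^ (b+1))
        = (∫ t in (0:ℝ)..1, (1 - t) ^ (b+1) * t ^ a) := by
      apply intervalIntegral.integral_congr; intro t _; ring
    rw [h2, h1, ih (a+1)]
    have ha : ((a:ℝ)+1) ≠ 0 := by positivity
    have hf : ((a + 1 + b + 1).factorial : ℝ) ≠ 0 := by positivity
    have : (a + 1) + b + 1 = (a + (b+1) + 1) := by ring
    rw [show (a + 1) + b + 1 = (a + (b+1) + 1) by ring] at *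
    push_cast [Nat.factorial_succ]
    field_simp

instance unif_prob : IsProbabilityMeasure unif :=
  ⟨by simp [unif, Real.volume_Icc]⟩

lemma integral_unif (f : ℝ → ℝ) :
    ∫ u, f u ∂unif = ∫ u in (0:ℝ)..1, f u := by
  rw [unif, intervalIntegral.integral_of_le (by norm_num : (0:ℝ) ≤ 1),
    ← MeasureTheory.integral_Icc_eq_integral_Ioc]

lemma integral_unif_sqrt_pow (k j : ℕ) :
    ∫ u, (Real.sqrt u) ^ k * (1 - Real.sqrt u) ^ j ∂unif
      = 2 * ((k+1).factorial * j.factorial : ℝ) / ((k + j + 2).factorial : ℝ) := by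
  rw [integral_unif]
  have hf : ∀ t ∈ Set.uIcc (0:ℝ) 1, HasDerivAt (fun t : ℝ => t ^ 2) (2 * t) t := by
    intro t _
    simpa using (hasDerivAt_pow 2 t)
  have hg : Continuous fun u : ℝ => (Real.sqrt u) ^ k * (1 - Real.sqrt u) ^ j := by
    continuity
  have := intervalIntegral.integral_comp_smul_deriv hf
    ((continuous_const.mul continuous_id).continuousOn) hg
  norm_num at this
  rw [← this]
  have hcongr : (∫ t in (0:ℝ)..1, 2 * t * ((Real.sqrt (t^2)) ^ k * (1 - Real.sqrt (t^2)) ^ j))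
      = ∫ t in (0:ℝ)..1, 2 * (t ^ (k+1) * (1 - t) ^ j) := by
    apply intervalIntegral.integral_congr
    intro t ht
    rw [Set.uIcc_of_le (by norm_num : (0:ℝ) ≤ 1)] at ht
    simp only [Function.comp, smul_eq_mul, Real.sqrt_sq ht.1]
    ring
  rw [hcongr, intervalIntegral.integral_const_mul, beta_nat]
  rw [show k + 1 + j + 1 = k + j + 2 by ring]
  ring

def hdist (x : ℝ) : ℝ := max (max (x - 1) (-x)) 0

lemma hdist_nonneg (x : ℝ) : 0 ≤ hdist x := le_max_right _ _

lemma hdist_meas : Measurable hdist := by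
  unfold hdist; fun_prop

lemma rdeMap_cont : Continuous rdeMap := by
  unfold rdeMap; fun_prop

lemma rdeMap_meas : Measurable rdeMap := rdeMap_cont.measurable

lemma key_pointwise (x u : ℝ) (hu : u ∈ Set.Icc (0:ℝ) 1) :
    hdist (rdeMap (x, u)) ≤ Real.sqrt u * hdist x := by
  set s := Real.sqrt u with hs
  have hs0 : 0 ≤ s := Real.sqrt_nonneg u
  have hs1 : s ≤ 1 := Real.sqrt_le_one.mpr hu.2
  have hx1 : x - 1 ≤ hdist x := le_trans (le_max_left _ _) (le_max_left _ _)
  have hx2 : -x ≤ hdist x := le_trans (le_max_right _ _) (le_max_left _ _)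
  have hx0 : 0 ≤ hdist x := hdist_nonneg x
  show max (max (s * x + s * (1 - s) - 1) (-(s * x + s * (1 - s)))) 0 ≤ s * hdist x
  apply max_le (max_le _ _) (mul_nonneg hs0 hx0)
  · nlinarith [mul_le_mul_of_nonneg_left hx1 hs0, sq_nonneg (1 - s)]
  · nlinarith [mul_le_mul_of_nonneg_left hx2 hs0]

lemma tail_sets_meas (t : ℝ) : MeasurableSet {x : ℝ | t < hdist x} :=
  measurableSet_lt measurable_const hdist_meas

lemma tail_step (μ : Measure ℝ) (hμ : IsRDESolution μ) {t : ℝ} (ht : 0 < t) :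
    μ {x | t < hdist x} ≤ μ {x | 2 * t < hdist x} * ENNReal.ofReal (1/4)
      + μ {x | t < hdist x} * ENNReal.ofReal (3/4) := by
  obtain ⟨hp, heq⟩ := hμ
  have hS := tail_sets_meas t
  have h1 : μ {x | t < hdist x} = (μ.prod unif) (rdeMap ⁻¹' {x | t < hdist x}) := by
    conv_lhs => rw [← heq]
    rw [Measure.map_apply rdeMap_meas hS]
  have hnull : (μ.prod unif) (Set.univ ×ˢ Set.Icc (0:ℝ) 1)ᶜ = 0 := by
    have : (Set.univ ×ˢ Set.Icc (0:ℝ) 1)ᶜ = (Set.univ : Set ℝ) ×ˢ (Set.Icc (0:ℝ) 1)ᶜ := by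
      ext p; simp
    rw [this, Measure.prod_prod]
    have : unif (Set.Icc (0:ℝ) 1)ᶜ = 0 := by
      rw [unif, Measure.restrict_apply (measurableSet_Icc.compl)]
      simp
    rw [this, mul_zero]
  have h2 : (μ.prod unif) (rdeMap ⁻¹' {x | t < hdist x})
      = (μ.prod unif) ((rdeMap ⁻¹' {x | t < hdist x}) ∩ (Set.univ ×ˢ Set.Icc (0:ℝ) 1)) :=
    (measure_inter_conull hnull).symm
  have hsub : (rdeMap ⁻¹' {x | t < hdist x}) ∩ (Set.univ ×ˢ Set.Icc (0:ℝ) 1)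
      ⊆ ({x : ℝ | 2 * t < hdist x} ×ˢ Set.Icc (0:ℝ) (1/4))
        ∪ ({x : ℝ | t < hdist x} ×ˢ Set.Ioc (1/4) (1:ℝ)) := by
    rintro ⟨x, u⟩ ⟨hpre, -, hu⟩
    have hkey : t < Real.sqrt u * hdist x :=
      lt_of_lt_of_le hpre (key_pointwise x u hu)
    have hs0 : 0 ≤ Real.sqrt u := Real.sqrt_nonneg u
    have hsq : Real.sqrt u ^ 2 = u := Real.sq_sqrt hu.1
    have hx0 : 0 ≤ hdist x := hdist_nonneg x
    by_cases hu4 : u ≤ 1/4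
    · left
      refine ⟨?_, hu.1, hu4⟩
      have hs12 : Real.sqrt u ≤ 1/2 := by nlinarith
      show 2 * t < hdist x
      nlinarith [mul_le_mul_of_nonneg_right hs12 hx0]
    · right
      refine ⟨?_, lt_of_not_ge hu4, hu.2⟩
      have hs1 : Real.sqrt u ≤ 1 := Real.sqrt_le_one.mpr hu.2
      show t < hdist x
      nlinarith [mul_le_mul_of_nonneg_right hs1 hx0]
  refine le_trans (le_of_eq (h1.trans h2)) (le_trans (measure_mono hsub)
    (le_trans (measure_union_le _ _) (le_of_eq ?_)))
  rw [Measure.prod_prod, Measure.prod_prod]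
  have e1 : unif (Set.Icc (0:ℝ) (1/4)) = ENNReal.ofReal (1/4) := by
    rw [unif, Measure.restrict_apply measurableSet_Icc]
    rw [Set.Icc_inter_Icc]
    norm_num [Real.volume_Icc]
  have e2 : unif (Set.Ioc (1/4) (1:ℝ)) = ENNReal.ofReal (3/4) := by
    rw [unif, Measure.restrict_apply measurableSet_Ioc]
    have : Set.Ioc (1/4) (1:ℝ) ∩ Set.Icc 0 1 = Set.Ioc (1/4) (1:ℝ) := by
      rw [Set.inter_eq_left]
      intro y hy
      exact ⟨le_trans (by norm_num) hy.1.le, hy.2⟩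
    rw [this, Real.volume_Ioc]
    norm_num
  rw [e1, e2]

lemma ae_mem_Icc (μ : Measure ℝ) (hμ : IsRDESolution μ) :
    ∀ᵐ x ∂μ, x ∈ Set.Icc (0:ℝ) 1 := by
  have hp : IsProbabilityMeasure μ := hμ.1
  -- step: for t > 0, μ {t < hdist} ≤ μ {2t < hdist}
  have step : ∀ t : ℝ, 0 < t → μ {x | t < hdist x} ≤ μ {x | 2 * t < hdist x} := by
    intro t ht
    have h := tail_step μ hμ ht
    have ha : μ {x | t < hdist x} ≠ ⊤ := measure_ne_top _ _
    have hb : μ {x | 2 * t < hdist x} ≠ ⊤ := measure_ne_top _ _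
    set a := (μ {x | t < hdist x}).toReal with hadef
    set b := (μ {x | 2 * t < hdist x}).toReal with hbdef
    have h' : a ≤ b * (1/4) + a * (3/4) := by
      have := ENNReal.toReal_mono (by
        exact ENNReal.add_ne_top.2 ⟨ENNReal.mul_ne_top hb (by simp), ENNReal.mul_ne_top ha (by simp)⟩) h
      rwa [ENNReal.toReal_add (ENNReal.mul_ne_top hb (by simp)) (ENNReal.mul_ne_top ha (by simp)),
        ENNReal.toReal_mul, ENNReal.toReal_mul, ENNReal.toReal_ofReal (by norm_num),
        ENNReal.toReal_ofReal (by norm_num)] at this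
    have : a ≤ b := by linarith
    exact (ENNReal.toReal_le_toReal ha hb).1 this
  -- iterate
  have iter : ∀ t : ℝ, 0 < t → ∀ n : ℕ, μ {x | t < hdist x} ≤ μ {x | 2^n * t < hdist x} := by
    intro t ht n
    induction n with
    | zero => simp
    | succ n ih =>
      refine le_trans ih (le_trans (step (2^n * t) (by positivity)) (le_of_eq ?_))
      congr 2
      ext x
      rw [show 2 * (2^n * t) = 2^(n+1) * t by ring]
  have tail_zero : ∀ t : ℝ, 0 < t → μ {x | t < hdist x} = 0 := by
    intro t ht
    set s : ℕ → Set ℝ := fun n => {x | 2^n * t < hdist x} with hsdef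
    have hmeas : ∀ n, NullMeasurableSet (s n) μ :=
      fun n => (tail_sets_meas _).nullMeasurableSet
    have hanti : Antitone s := by
      intro m n hmn x hx
      have : (2:ℝ)^m * t ≤ 2^n * t := by
        have : (2:ℝ)^m ≤ 2^n := pow_le_pow_right₀ (by norm_num) hmn
        nlinarith
      exact lt_of_le_of_lt this hx
    have hempty : ⋂ n, s n = ∅ := by
      ext x
      simp only [Set.mem_iInter, Set.mem_empty_iff_false, iff_false, not_forall]
      obtain ⟨n, hn⟩ := pow_unbounded_of_one_lt (hdist x / t) (by norm_num : (1:ℝ) < 2)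
      exact ⟨n, by simp only [s, Set.mem_setOf_eq, not_lt]; exact le_of_lt (by
        rw [div_lt_iff₀ ht] at hn; linarith)⟩
    have htend := tendsto_measure_iInter_atTop hmeas hanti ⟨0, measure_ne_top _ _⟩
    rw [hempty] at htend
    simp only [measure_empty] at htend
    have hle : ∀ n, μ {x | t < hdist x} ≤ (μ ∘ s) n := fun n => iter t ht n
    exact le_antisymm (ge_of_tendsto' htend hle) zero_le
  rw [MeasureTheory.ae_iff]
  have hsub : {x : ℝ | ¬ x ∈ Set.Icc (0:ℝ) 1} ⊆ ⋃ n : ℕ, {x | 1/(n+1:ℝ) < hdist x} := by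
    intro x hx
    have hpos : 0 < hdist x := by
      simp only [Set.mem_setOf_eq, Set.mem_Icc, not_and_or, not_le] at hx
      rcases hx with hx | hx
      · exact lt_of_lt_of_le (by linarith) (le_trans (le_max_right _ _) (le_max_left _ _))
      · exact lt_of_lt_of_le (by linarith) (le_trans (le_max_left _ _) (le_max_left _ _))
    obtain ⟨n, hn⟩ := exists_nat_one_div_lt hpos
    exact Set.mem_iUnion.2 ⟨n, hn⟩
  refine measure_mono_null hsub ?_
  exact measure_iUnion_null fun n => tail_zero _ (by positivity)

lemma int_pow (μ : Measure ℝ) (hμ : IsRDESolution μ) (i : ℕ) :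
    Integrable (fun x : ℝ => x ^ i) μ := by
  have hp : IsProbabilityMeasure μ := hμ.1
  refine (integrable_const (1:ℝ)).mono' ?_ ?_
  · exact (continuous_pow i).aestronglyMeasurable
  · filter_upwards [ae_mem_Icc μ hμ] with x hx
    rw [Real.norm_eq_abs, abs_pow]
    exact pow_le_one₀ (abs_nonneg x) (abs_le.2 ⟨by linarith [hx.1], hx.2⟩)

lemma int_g_unif (f : ℝ → ℝ) (hf : Continuous f) : Integrable f unif :=
  hf.integrableOn_Icc

lemma moment_rec (μ : Measure ℝ) (hμ : IsRDESolution μ) (k : ℕ) :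
    ∫ x, x ^ k ∂μ = ∑ i ∈ Finset.range (k+1),
      (k.choose i : ℝ) * ((∫ x, x ^ i ∂μ) *
        (2 * ((k+1).factorial * (k-i).factorial : ℝ) / ((k + (k-i) + 2).factorial : ℝ))) := by
  haveI : IsProbabilityMeasure μ := hμ.1
  have hmap : ∫ x, x ^ k ∂μ = ∫ p, (rdeMap p) ^ k ∂(μ.prod unif) := by
    conv_lhs => rw [← hμ.2]
    rw [integral_map rdeMap_meas.aemeasurable ((continuous_pow k).aestronglyMeasurable)]
  rw [hmap]
  have hexp : ∀ p : ℝ × ℝ, (rdeMap p) ^ k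
      = ∑ i ∈ Finset.range (k+1),
          (k.choose i : ℝ) * (p.1 ^ i * ((Real.sqrt p.2) ^ k * (1 - Real.sqrt p.2) ^ (k-i))) := by
    intro p
    rw [rdeMap, add_pow]
    apply Finset.sum_congr rfl
    intro i hi
    have hik : i ≤ k := Nat.lt_succ_iff.mp (Finset.mem_range.mp hi)
    rw [mul_pow, mul_pow]
    rw [show (Real.sqrt p.2) ^ k = (Real.sqrt p.2) ^ i * (Real.sqrt p.2) ^ (k - i) by
      rw [← pow_add, Nat.add_sub_cancel' hik]]
    ring
  simp_rw [hexp]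
  rw [integral_finset_sum]
  · apply Finset.sum_congr rfl
    intro i hi
    have hint : Integrable (fun p : ℝ × ℝ =>
        p.1 ^ i * ((Real.sqrt p.2) ^ k * (1 - Real.sqrt p.2) ^ (k-i))) (μ.prod unif) :=
      (int_pow μ hμ i).mul_prod (int_g_unif (fun u => (Real.sqrt u) ^ k * (1 - Real.sqrt u) ^ (k-i)) (by fun_prop))
    rw [MeasureTheory.integral_const_mul, integral_prod_mul (μ := μ) (ν := unif) (fun x => x ^ i)
      (fun u => (Real.sqrt u) ^ k * (1 - Real.sqrt u) ^ (k-i)), integral_unif_sqrt_pow]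
  · intro i hi
    exact ((int_pow μ hμ i).mul_prod (int_g_unif (fun u => (Real.sqrt u) ^ k * (1 - Real.sqrt u) ^ (k-i)) (by fun_prop))).const_mul _

lemma rec_form (μ : Measure ℝ) (hμ : IsRDESolution μ) (k : ℕ) (hk : 1 ≤ k) :
    ∫ x, x ^ k ∂ μ =
      2 * ((k + 2).factorial : ℝ) * ((k - 1).factorial : ℝ) *
        ∑ i ∈ Finset.range k,
          (∫ x, x ^ i ∂ μ) / (((2 * k - i + 2).factorial : ℝ) * (i.factorial : ℝ)) := by
  set m : ℕ → ℝ := fun i => ∫ x, x ^ i ∂μ with hm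
  have hrec := moment_rec μ hμ k
  rw [Finset.sum_range_succ] at hrec
  have hkk : k - k = 0 := Nat.sub_self k
  rw [hkk] at hrec
  have hf2 : ((k+2).factorial : ℝ) = (k+2) * (k+1).factorial := by
    rw [show k + 2 = (k+1) + 1 by ring, Nat.factorial_succ]
    push_cast; ring
  have hlast : (k.choose k : ℝ) * ((∫ x, x ^ k ∂μ) *
      (2 * ((k+1).factorial * (Nat.factorial 0) : ℝ) / ((k + 0 + 2).factorial : ℝ)))
      = m k * (2 / ((k:ℝ)+2)) := by
    rw [Nat.choose_self, Nat.factorial_zero, show k + 0 + 2 = k + 2 by ring, hf2]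
    have h1 : ((k+1).factorial : ℝ) ≠ 0 := by positivity
    have h2 : ((k:ℝ)+2) ≠ 0 := by positivity
    push_cast
    field_simp
    ring
  rw [hlast] at hrec
  -- solve for m k
  have hk0 : (k:ℝ) ≠ 0 := by
    have : k ≠ 0 := by omega
    exact_mod_cast this
  have hk2 : ((k:ℝ)+2) ≠ 0 := by positivity
  have hsolve : m k = ((k:ℝ)+2)/k * ∑ i ∈ Finset.range k,
      (k.choose i : ℝ) * (m i *
        (2 * ((k+1).factorial * (k-i).factorial : ℝ) / ((k + (k-i) + 2).factorial : ℝ))) := by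
    have : m k * (1 - 2/((k:ℝ)+2)) = ∑ i ∈ Finset.range k,
        (k.choose i : ℝ) * (m i *
          (2 * ((k+1).factorial * (k-i).factorial : ℝ) / ((k + (k-i) + 2).factorial : ℝ))) := by
      rw [mul_sub, mul_one]
      linarith [hrec]
    have h3 : (1 - 2/((k:ℝ)+2)) = k/((k:ℝ)+2) := by field_simp; ring
    rw [h3] at this
    field_simp at this ⊢
    rw [this]; congr 1; apply Finset.sum_congr rfl; intro i _; ring
  rw [show (∫ x, x ^ k ∂ μ) = m k from rfl, hsolve, Finset.mul_sum, Finset.mul_sum]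
  apply Finset.sum_congr rfl
  intro i hi
  have hik : i < k := Finset.mem_range.mp hi
  have hik' : i ≤ k := hik.le
  have hidx : k + (k - i) + 2 = 2 * k - i + 2 := by omega
  rw [hidx]
  have hchoose : (k.choose i : ℝ) = (k.factorial : ℝ) / ((i.factorial : ℝ) * ((k-i).factorial : ℝ)) :=
    Nat.cast_choose ℝ hik'
  have hfk : (k.factorial : ℝ) = k * ((k-1).factorial : ℝ) := by
    rw [← Nat.mul_factorial_pred (by omega)]
    push_cast; ring
  have n1 : ((i.factorial : ℝ)) ≠ 0 := by positivity
  have n2 : (((k-i).factorial : ℝ)) ≠ 0 := by positivity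
  have n3 : (((2*k-i+2).factorial : ℝ)) ≠ 0 := by positivity
  have n4 : (((k+1).factorial : ℝ)) ≠ 0 := by positivity
  rw [hchoose]
  field_simp
  rw [hf2, hfk]
  ring

/-- Moment recursion for the solution `X` of the RDE `X =_d √U·X + √U·(1 − √U)`:
`E[X^k] = 2·(k+2)!·(k−1)!·Σ_{i=0}^{k−1} E[X^i]/((2k−i+2)!·i!)` for `k ≥ 1`; in particular
`E[X] = 1/2`, `E[X²] = 4/15` and `Var(X) = 1/60`. -/
theorem rde_moments (μ : Measure ℝ) (hμ : IsRDESolution μ) :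
    (∀ k : ℕ, 1 ≤ k →
      ∫ x, x ^ k ∂ μ =
        2 * ((k + 2).factorial : ℝ) * ((k - 1).factorial : ℝ) *
          ∑ i ∈ Finset.range k,
            (∫ x, x ^ i ∂ μ) / (((2 * k - i + 2).factorial : ℝ) * (i.factorial : ℝ))) ∧
    (∫ x, x ∂ μ) = 1 / 2 ∧
    (∫ x, x ^ 2 ∂ μ) = 4 / 15 ∧
    (∫ x, x ^ 2 ∂ μ) - (∫ x, x ∂ μ) ^ 2 = 1 / 60 := by
  haveI : IsProbabilityMeasure μ := hμ.1
  have m0 : (∫ x : ℝ, x ^ 0 ∂μ) = 1 := by simp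
  have h1 : (∫ x, x ∂ μ) = 1 / 2 := by
    have h := rec_form μ hμ 1 le_rfl
    rw [Finset.sum_range_one, m0] at h
    simp only [pow_one] at h
    norm_num [Nat.factorial] at h
    exact h
  have h2 : (∫ x, x ^ 2 ∂ μ) = 4 / 15 := by
    have h := rec_form μ hμ 2 (by norm_num)
    rw [Finset.sum_range_succ, Finset.sum_range_one, m0] at h
    simp only [pow_one] at h
    rw [h1] at h
    norm_num [Nat.factorial] at h
    exact h
  exact ⟨fun k hk => rec_form μ hμ k hk, h1, h2, by rw [h1, h2]; norm_num⟩
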